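/- Let V be an n-dimensional vector space over a field K of characteristic zero and let φ be a linear endomorphism of V. If there exists a linear functional ᾱ on V such that (ᾱ, ᾱ∘φ, ..., ᾱ∘φ^{n-1}) is a basis of the dual space V*, then there exists a vector x̄ in V such that (x̄, φ(x̄), ..., φ^{n-1}(x̄)) is a basis of V. -/

import Mathlib

/-- If some linear functional `α` has `(α, α∘φ, …, α∘φ^{n-1})` a basis of the dual `V*`,
then some vector `x` has `(x, φ x, …, φ^{n-1} x)` a basis of `V`. -/
theorem stmt0 {K V : Type*} [Field K] [CharZero K] [AddCommGroup V] [Module K V]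
    [FiniteDimensional K V] {n : ℕ} (hn : Module.finrank K V = n)
    (φ : Module.End K V) (α : Module.Dual K V)
    (b : Module.Basis (Fin n) K (Module.Dual K V))
    (hb : ∀ i : Fin n, b i = α ∘ₗ (φ ^ (i : ℕ) : Module.End K V)) :
    ∃ (x : V) (c : Module.Basis (Fin n) K V), ∀ i : Fin n, c i = (φ ^ (i : ℕ)) x := by
  rcases n with _ | m
  · haveI : Subsingleton V := Module.finrank_zero_iff.mp hn
    exact ⟨0, Module.Basis.empty V, fun i => i.elim0⟩
  -- n = m + 1
  set x : V := (Module.evalEquiv K V).symm (b.dualBasis (Fin.last m)) with hxdef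
  have hx : ∀ i : Fin (m + 1), b i x = if i = Fin.last m then 1 else 0 := by
    intro i
    rw [hxdef, Module.apply_evalEquiv_symm_apply, Module.Basis.dualBasis_apply_self]
  -- key: α (φ^k x) = 0 for k < m, = 1 for k = m
  have key : ∀ k : ℕ, (hk : k < m + 1) → α ((φ ^ k) x) = if k = m then 1 else 0 := by
    intro k hk
    have := hx ⟨k, hk⟩
    rw [hb ⟨k, hk⟩] at this
    simpa [Fin.ext_iff, Fin.last] using this
  -- linear independence of j ↦ φ^j x
  have hli : LinearIndependent K (fun j : Fin (m + 1) => (φ ^ (j : ℕ)) x) := by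
    rw [Fintype.linearIndependent_iff]
    intro g hg
    -- the equations obtained by applying b i
    have E : ∀ i : Fin (m + 1),
        (∑ j : Fin (m + 1), g j * α ((φ ^ ((i : ℕ) + (j : ℕ))) x)) = 0 := by
      intro i
      have := congrArg (b i) hg
      rw [map_sum, map_zero] at this
      rw [← this]
      refine Finset.sum_congr rfl fun j _ => ?_
      rw [hb i, map_smul]
      simp [pow_add, Module.End.mul_apply, smul_eq_mul]
    -- downward induction: g ⟨m - i⟩ = 0
    have main : ∀ i : ℕ, i < m + 1 → g ⟨m - i, by omega⟩ = 0 := by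
      intro i
      induction i using Nat.strong_induction_on with
      | _ i IH =>
        intro hi
        have hzero : ∀ j : Fin (m + 1), m - i < (j : ℕ) → g j = 0 := by
          intro j hj
          have hj' : (j : ℕ) ≤ m := Nat.lt_succ_iff.mp j.isLt
          have h1 : m - (j : ℕ) < i := by omega
          have h2 := IH _ h1 (by omega)
          have h3 : (⟨m - (m - (j : ℕ)), by omega⟩ : Fin (m + 1)) = j :=
            Fin.ext (show m - (m - (j : ℕ)) = (j : ℕ) by omega)
          rwa [h3] at h2
        have Ei := E ⟨i, hi⟩
        rw [Finset.sum_eq_single (⟨m - i, by omega⟩ : Fin (m + 1))] at Ei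
        · simp only [Fin.val_mk] at Ei
          rw [show i + (m - i) = m by omega, key m (by omega), if_pos rfl, mul_one] at Ei
          exact Ei
        · intro j _ hj
          rcases lt_or_gt_of_ne (fun h => hj (Fin.ext h.symm) : (m - i : ℕ) ≠ (j : ℕ)) with h | h
          · rw [hzero j h, zero_mul]
          · have hlt : i + (j : ℕ) < m + 1 := by omega
            rw [key _ hlt, if_neg (by omega), mul_zero]
        · intro h; exact absurd (Finset.mem_univ _) h
    intro j
    have hj' : (j : ℕ) ≤ m := Nat.lt_succ_iff.mp j.isLt
    have h2 := main (m - (j : ℕ)) (by omega)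
    have h3 : (⟨m - (m - (j : ℕ)), by omega⟩ : Fin (m + 1)) = j :=
      Fin.ext (show m - (m - (j : ℕ)) = (j : ℕ) by omega)
    rwa [h3] at h2
  refine ⟨x, basisOfLinearIndependentOfCardEqFinrank hli (by simp [hn]), fun i => ?_⟩
  rw [coe_basisOfLinearIndependentOfCardEqFinrank]
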